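/- (Serfling's bound.) Let Y₁,…,Y_T ∈ {0,1} with T = N + K, and let Π be a uniformly random subset of {1,…,T} of size K (sampling without replacement). Then for any 0 < ν < 1, Pr[ Σ_{j∉Π} Y_j ≥ (N/K) Σ_{j∈Π} Y_j + Nν ] ≤ exp( -2ν²NK² / ((N+K)(K+1)) ). -/

import Mathlib

open scoped Classical

open Real Finset

lemma gpos {p : ℝ} (hp0 : 0 ≤ p) (hp1 : p ≤ 1) (x : ℝ) :
    0 < 1 - p + p * Real.exp x := by
  nlinarith [Real.exp_pos x, mul_nonneg hp0 (Real.exp_pos x).le,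
    mul_nonneg (sub_nonneg.2 hp1) (Real.exp_pos x).le]

lemma bernoulli_mgf {p : ℝ} (hp0 : 0 ≤ p) (hp1 : p ≤ 1) (t : ℝ) :
    1 - p + p * Real.exp t ≤ Real.exp (t * p + t ^ 2 / 8) := by
  set g : ℝ → ℝ := fun x => 1 - p + p * Real.exp x with hgdef
  have hg : ∀ x, 0 < g x := fun x => gpos hp0 hp1 x
  have hgd : ∀ x, HasDerivAt g (p * Real.exp x) x := by
    intro x
    exact ((Real.hasDerivAt_exp x).const_mul p).const_add (1 - p)
  set φ' : ℝ → ℝ := fun x => p + x / 4 - p * Real.exp x / g x with hφ'def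
  set φ : ℝ → ℝ := fun x => x * p + x ^ 2 / 8 - Real.log (g x) with hφdef
  have hφd : ∀ x, HasDerivAt φ (φ' x) x := by
    intro x
    have h1 : HasDerivAt (fun x : ℝ => x * p + x ^ 2 / 8) (p + x / 4) x := by
      have := ((hasDerivAt_id x).mul_const p).add ((hasDerivAt_pow 2 x).div_const 8)
      exact this.congr_deriv (by norm_num; ring)
    have h2 : HasDerivAt (fun x => Real.log (g x)) (p * Real.exp x / g x) x :=
      (hgd x).log (hg x).ne'
    exact h1.sub h2
  have hφ'd : ∀ x, HasDerivAt φ'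
      (1 / 4 - (p * Real.exp x * g x - p * Real.exp x * (p * Real.exp x)) / (g x) ^ 2) x := by
    intro x
    have h1 : HasDerivAt (fun x : ℝ => p + x / 4) (1 / 4) x := by
      simpa using ((hasDerivAt_id x).div_const 4).const_add p
    have h2 : HasDerivAt (fun x => p * Real.exp x / g x)
        ((p * Real.exp x * g x - p * Real.exp x * (p * Real.exp x)) / (g x) ^ 2) x :=
      ((Real.hasDerivAt_exp x).const_mul p).div (hgd x) (hg x).ne'
    exact h1.sub h2
  have hφ''nonneg : ∀ x, 0 ≤ 1 / 4 -
      (p * Real.exp x * g x - p * Real.exp x * (p * Real.exp x)) / (g x) ^ 2 := by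
    intro x
    have hgx : (0:ℝ) < (g x) ^ 2 := pow_pos (hg x) 2
    rw [sub_nonneg, div_le_iff₀ hgx]
    have hgx2 : g x = 1 - p + p * Real.exp x := rfl
    nlinarith [sq_nonneg ((1 - p) - p * Real.exp x), Real.exp_pos x]
  have hφ'mono : Monotone φ' := by
    apply monotone_of_deriv_nonneg
    · exact fun x => (hφ'd x).differentiableAt
    · intro x
      rw [(hφ'd x).deriv]
      exact hφ''nonneg x
  have hφ'0 : φ' 0 = 0 := by
    simp [hφ'def, hgdef, Real.exp_zero]
  have hφ0 : φ 0 = 0 := by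
    simp [hφdef, hgdef, Real.exp_zero]
  have hdiff : Differentiable ℝ φ := fun x => (hφd x).differentiableAt
  have key : ∀ x, 0 ≤ φ x := by
    intro x
    rcases le_total 0 x with hx | hx
    · have hmono : MonotoneOn φ (Set.Ici 0) := by
        apply monotoneOn_of_deriv_nonneg (convex_Ici 0) hdiff.continuous.continuousOn
          hdiff.differentiableOn
        intro y hy
        rw [interior_Ici] at hy
        rw [(hφd y).deriv]
        have := hφ'mono (le_of_lt hy)
        rw [hφ'0] at this
        exact this
      have := hmono Set.self_mem_Ici hx hx
      rwa [hφ0] at this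
    · have hanti : AntitoneOn φ (Set.Iic 0) := by
        apply antitoneOn_of_deriv_nonpos (convex_Iic 0) hdiff.continuous.continuousOn
          hdiff.differentiableOn
        intro y hy
        rw [interior_Iic] at hy
        rw [(hφd y).deriv]
        have := hφ'mono (le_of_lt hy)
        rw [hφ'0] at this
        exact this
      have := hanti hx Set.self_mem_Iic hx
      rwa [hφ0] at this
  have htkey := key t
  have hφt : φ t = t * p + t ^ 2 / 8 - Real.log (g t) := rfl
  have hlog : Real.log (g t) ≤ t * p + t ^ 2 / 8 := by
    rw [hφt] at htkey; linarith
  exact (Real.log_le_iff_le_exp (hg t)).1 hlog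


lemma sum_erase_eq {T k : ℕ} (f : Finset (Fin T) → ℝ) :
    ∑ S' ∈ Finset.powersetCard (k+1) (Finset.univ : Finset (Fin T)), ∑ j ∈ S', f (S'.erase j)
      = ∑ S ∈ Finset.powersetCard k (Finset.univ : Finset (Fin T)),
          ∑ _j ∈ (Finset.univ : Finset (Fin T)) \ S, f S := by
  classical
  rw [Finset.sum_sigma', Finset.sum_sigma']
  apply Finset.sum_nbij' (i := fun x => (⟨x.1.erase x.2, x.2⟩ : Σ _ : Finset (Fin T), Fin T))
    (j := fun x => (⟨insert x.2 x.1, x.2⟩ : Σ _ : Finset (Fin T), Fin T))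
  · rintro ⟨S', j⟩ hx
    rw [Finset.mem_sigma] at hx ⊢
    obtain ⟨hS', hj⟩ := hx
    rw [Finset.mem_powersetCard] at hS'
    refine ⟨Finset.mem_powersetCard.2 ⟨Finset.subset_univ _, ?_⟩, ?_⟩
    · rw [Finset.card_erase_of_mem hj, hS'.2]; rfl
    · simp [Finset.mem_sdiff]
  · rintro ⟨S, j⟩ hx
    rw [Finset.mem_sigma] at hx ⊢
    obtain ⟨hS, hj⟩ := hx
    rw [Finset.mem_powersetCard] at hS
    rw [Finset.mem_sdiff] at hj
    refine ⟨Finset.mem_powersetCard.2 ⟨Finset.subset_univ _, ?_⟩, ?_⟩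
    · rw [Finset.card_insert_of_notMem hj.2, hS.2]
    · exact Finset.mem_insert_self _ _
  · rintro ⟨S', j⟩ hx
    rw [Finset.mem_sigma] at hx
    simp only [Finset.insert_erase hx.2]
  · rintro ⟨S, j⟩ hx
    rw [Finset.mem_sigma] at hx
    rw [Finset.mem_sdiff] at hx
    simp only [Finset.erase_insert hx.2.2]
  · rintro ⟨S', j⟩ _
    rfl

lemma step_subset {T : ℕ} (Y : Fin T → ℝ) (hY : ∀ j, Y j = 0 ∨ Y j = 1) (c : ℝ)
    (S' : Finset (Fin T)) (k : ℕ) (hS' : S'.card = k + 1) :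
    ∑ j ∈ S', Real.exp (c * (∑ i ∈ S', Y i - Y j)) ≤
      ((k : ℝ) + 1) * Real.exp (c * k / (k + 1) * ∑ i ∈ S', Y i + c ^ 2 / 8) := by
  classical
  set O := S'.filter (fun j => Y j = 1) with hO
  set a : ℝ := (O.card : ℝ) with ha
  have hsum : ∑ i ∈ S', Y i = a := by
    rw [← Finset.sum_filter_add_sum_filter_not S' (fun j => Y j = 1)]
    have h1 : ∑ i ∈ O, Y i = a := by
      rw [Finset.sum_congr rfl (fun i hi => (Finset.mem_filter.1 hi).2)]
      simp [ha, hO]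
    have h2 : ∑ i ∈ S'.filter (fun j => ¬ Y j = 1), Y i = 0 := by
      apply Finset.sum_eq_zero
      intro i hi
      rcases hY i with h | h
      · exact h
      · exact absurd h (Finset.mem_filter.1 hi).2
    rw [h1, h2, add_zero]
  have hcards : O.card + (S'.filter (fun j => ¬ Y j = 1)).card = k + 1 := by
    rw [← hS']
    exact Finset.card_filter_add_card_filter_not _
  have hq : (0:ℝ) < (k : ℝ) + 1 := by positivity
  set p : ℝ := a / ((k:ℝ) + 1) with hp
  have hp0 : 0 ≤ p := by positivity
  have hp1 : p ≤ 1 := by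
    rw [hp, div_le_one hq, ha]
    have : O.card ≤ k + 1 := le_of_add_le_left hcards.le
    exact_mod_cast this
  have hb := bernoulli_mgf hp0 hp1 (-c)
  -- rewrite LHS
  have hLHS : ∑ j ∈ S', Real.exp (c * (∑ i ∈ S', Y i - Y j))
      = a * (Real.exp (c * a) * Real.exp (-c)) + ((k:ℝ) + 1 - a) * Real.exp (c * a) := by
    rw [← Finset.sum_filter_add_sum_filter_not S' (fun j => Y j = 1)]
    have h1 : ∑ j ∈ O, Real.exp (c * (∑ i ∈ S', Y i - Y j))
        = a * (Real.exp (c * a) * Real.exp (-c)) := by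
      have hterm : ∀ j ∈ O, Real.exp (c * (∑ i ∈ S', Y i - Y j))
          = Real.exp (c * a) * Real.exp (-c) := by
        intro j hj
        rw [(Finset.mem_filter.1 hj).2, hsum, ← Real.exp_add]
        congr 1
        ring
      rw [Finset.sum_congr rfl hterm, Finset.sum_const, nsmul_eq_mul, ha]
    have h2 : ∑ j ∈ S'.filter (fun j => ¬ Y j = 1), Real.exp (c * (∑ i ∈ S', Y i - Y j))
        = ((k:ℝ) + 1 - a) * Real.exp (c * a) := by
      have hterm : ∀ j ∈ S'.filter (fun j => ¬ Y j = 1),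
          Real.exp (c * (∑ i ∈ S', Y i - Y j)) = Real.exp (c * a) := by
        intro j hj
        have hYj : Y j = 0 := by
          rcases hY j with h | h
          · exact h
          · exact absurd h (Finset.mem_filter.1 hj).2
        rw [hYj, hsum, sub_zero]
      rw [Finset.sum_congr rfl hterm, Finset.sum_const, nsmul_eq_mul]
      have hcast : (O.card : ℝ) + ((S'.filter (fun j => ¬ Y j = 1)).card : ℝ)
          = (k : ℝ) + 1 := by exact_mod_cast congrArg Nat.cast hcards
      have : ((S'.filter (fun j => ¬ Y j = 1)).card : ℝ) = (k:ℝ) + 1 - a := by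
        rw [ha]; linarith
      rw [this]
    rw [h1, h2]
  -- rewrite RHS
  have hRHS : ((k : ℝ) + 1) * Real.exp (c * k / (k + 1) * ∑ i ∈ S', Y i + c ^ 2 / 8)
      = ((k:ℝ) + 1) * (Real.exp (c * a) * Real.exp (-c * p + (-c) ^ 2 / 8)) := by
    rw [hsum, ← Real.exp_add]
    congr 2
    rw [hp]
    field_simp
    ring
  rw [hLHS, hRHS]
  have hepos : 0 < Real.exp (c * a) := Real.exp_pos _
  have hpa : p * ((k:ℝ) + 1) = a := by
    rw [hp]; field_simp
  have key := mul_le_mul_of_nonneg_left hb (le_of_lt (mul_pos hq hepos))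
  have e1 : a * (Real.exp (c * a) * Real.exp (-c)) + ((k:ℝ) + 1 - a) * Real.exp (c * a)
      = (((k:ℝ) + 1) * Real.exp (c * a)) * (1 - p + p * Real.exp (-c)) := by
    linear_combination (Real.exp (c * a) - Real.exp (c * a) * Real.exp (-c)) * hpa
  have e2 : ((k:ℝ) + 1) * (Real.exp (c * a) * Real.exp (-c * p + (-c) ^ 2 / 8))
      = (((k:ℝ) + 1) * Real.exp (c * a)) * Real.exp (-c * p + (-c) ^ 2 / 8) := by ring
  rw [e1, e2]
  exact key

lemma mgf_step {T : ℕ} (Y : Fin T → ℝ) (hY : ∀ j, Y j = 0 ∨ Y j = 1) (c : ℝ)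
    (k : ℕ) (hk : k < T) :
    ((T - k : ℕ) : ℝ) * ∑ S ∈ Finset.powersetCard k (Finset.univ : Finset (Fin T)),
        Real.exp (c * ∑ i ∈ S, Y i)
      ≤ ((k : ℝ) + 1) * Real.exp (c ^ 2 / 8) *
          ∑ S' ∈ Finset.powersetCard (k + 1) (Finset.univ : Finset (Fin T)),
            Real.exp (c * k / (k + 1) * ∑ i ∈ S', Y i) := by
  classical
  have hL : ((T - k : ℕ) : ℝ) * ∑ S ∈ Finset.powersetCard k (Finset.univ : Finset (Fin T)),
      Real.exp (c * ∑ i ∈ S, Y i)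
      = ∑ S' ∈ Finset.powersetCard (k + 1) (Finset.univ : Finset (Fin T)),
          ∑ j ∈ S', Real.exp (c * (∑ i ∈ S', Y i - Y j)) := by
    have h1 : ∀ S' ∈ Finset.powersetCard (k + 1) (Finset.univ : Finset (Fin T)),
        ∑ j ∈ S', Real.exp (c * (∑ i ∈ S', Y i - Y j))
          = ∑ j ∈ S', (fun A => Real.exp (c * ∑ i ∈ A, Y i)) (S'.erase j) := by
      intro S' _
      apply Finset.sum_congr rfl
      intro j hj
      simp only
      rw [Finset.sum_erase_eq_sub hj]
    rw [Finset.sum_congr rfl h1, sum_erase_eq (fun A => Real.exp (c * ∑ i ∈ A, Y i))]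
    rw [Finset.mul_sum]
    apply Finset.sum_congr rfl
    intro S hS
    rw [Finset.mem_powersetCard] at hS
    rw [Finset.sum_const, nsmul_eq_mul]
    congr 2
    rw [Finset.card_sdiff_of_subset (Finset.subset_univ S), hS.2, Finset.card_univ, Fintype.card_fin]
  rw [hL]
  have h2 : ∀ S' ∈ Finset.powersetCard (k + 1) (Finset.univ : Finset (Fin T)),
      ∑ j ∈ S', Real.exp (c * (∑ i ∈ S', Y i - Y j))
        ≤ ((k : ℝ) + 1) * Real.exp (c * k / (k + 1) * ∑ i ∈ S', Y i + c ^ 2 / 8) := by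
    intro S' hS'
    rw [Finset.mem_powersetCard] at hS'
    exact step_subset Y hY c S' k hS'.2
  calc ∑ S' ∈ Finset.powersetCard (k + 1) (Finset.univ : Finset (Fin T)),
        ∑ j ∈ S', Real.exp (c * (∑ i ∈ S', Y i - Y j))
      ≤ ∑ S' ∈ Finset.powersetCard (k + 1) (Finset.univ : Finset (Fin T)),
        ((k : ℝ) + 1) * Real.exp (c * k / (k + 1) * ∑ i ∈ S', Y i + c ^ 2 / 8) :=
        Finset.sum_le_sum h2
    _ = ((k : ℝ) + 1) * Real.exp (c ^ 2 / 8) *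
          ∑ S' ∈ Finset.powersetCard (k + 1) (Finset.univ : Finset (Fin T)),
            Real.exp (c * k / (k + 1) * ∑ i ∈ S', Y i) := by
        rw [Finset.mul_sum]
        apply Finset.sum_congr rfl
        intro S' _
        rw [Real.exp_add]
        ring

lemma mgf_rec {T : ℕ} (Y : Fin T → ℝ) (hY : ∀ j, Y j = 0 ∨ Y j = 1) :
    ∀ n k : ℕ, T = k + n → 1 ≤ k → ∀ c : ℝ,
    ∑ S ∈ Finset.powersetCard k (Finset.univ : Finset (Fin T)), Real.exp (c * ∑ i ∈ S, Y i)
      ≤ (T.choose k : ℝ) *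
        Real.exp (c ^ 2 * (k : ℝ) ^ 2 * (∑ j ∈ Finset.Ico k T, ((j : ℝ) ^ 2)⁻¹) / 8
          + c * k * (∑ i, Y i) / T) := by
  intro n
  induction n with
  | zero =>
    intro k hTk hk1 c
    have hkT : k = T := by omega
    subst hkT
    have huniv : (Finset.univ : Finset (Fin k)).card = k := by
      rw [Finset.card_univ, Fintype.card_fin]
    have hps : Finset.powersetCard k (Finset.univ : Finset (Fin k)) = {Finset.univ} := by
      ext S
      simp only [Finset.mem_powersetCard, Finset.mem_singleton]
      constructor
      · rintro ⟨-, hc⟩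
        exact Finset.eq_univ_of_card S (by rw [hc, Fintype.card_fin])
      · rintro rfl
        exact ⟨Finset.subset_univ _, huniv⟩
    rw [hps, Finset.sum_singleton, Nat.choose_self, Finset.Ico_self, Finset.sum_empty,
      Nat.cast_one, one_mul]
    apply le_of_eq
    have hk0 : (k : ℝ) ≠ 0 := Nat.cast_ne_zero.2 (by omega)
    congr 1
    field_simp
    ring
  | succ n ih =>
    intro k hTk hk1 c
    have hkT : k < T := by omega
    have hstep := mgf_step Y hY c k hkT
    have hih := ih (k + 1) (by omega) (by omega) (c * k / (k + 1))
    have hq : (0 : ℝ) < (k : ℝ) + 1 := by positivity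
    have hTk0 : (0 : ℝ) < ((T - k : ℕ) : ℝ) := by
      have : 0 < T - k := by omega
      exact_mod_cast this
    -- combine
    have hchain : ((T - k : ℕ) : ℝ) * ∑ S ∈ Finset.powersetCard k (Finset.univ : Finset (Fin T)),
        Real.exp (c * ∑ i ∈ S, Y i)
        ≤ ((k : ℝ) + 1) * Real.exp (c ^ 2 / 8) * ((T.choose (k+1) : ℝ) *
          Real.exp ((c * k / (k + 1)) ^ 2 * ((k:ℝ) + 1) ^ 2 *
              (∑ j ∈ Finset.Ico (k+1) T, ((j : ℝ) ^ 2)⁻¹) / 8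
            + (c * k / (k + 1)) * ((k:ℝ)+1) * (∑ i, Y i) / T)) := by
      refine le_trans hstep ?_
      apply mul_le_mul_of_nonneg_left _ (by positivity)
      convert hih using 3
      · rfl
      push_cast
      ring
    -- simplify the RHS
    have hck : (c * k / (k + 1)) * ((k:ℝ)+1) = c * k := by field_simp
    have hck2 : (c * k / (k + 1)) ^ 2 * ((k:ℝ) + 1) ^ 2 = c ^ 2 * (k:ℝ) ^ 2 := by
      rw [← mul_pow, hck]; ring
    rw [hck, hck2] at hchain
    have hsplit : ∑ j ∈ Finset.Ico k T, ((j : ℝ) ^ 2)⁻¹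
        = ((k : ℝ) ^ 2)⁻¹ + ∑ j ∈ Finset.Ico (k+1) T, ((j : ℝ) ^ 2)⁻¹ :=
      Finset.sum_eq_sum_Ico_succ_bot hkT _
    have hkR : ((k : ℝ) ^ 2) ≠ 0 := by
      have : (0:ℝ) < (k:ℝ) := by exact_mod_cast hk1
      positivity
    set m := ∑ i, Y i with hm
    set Q' := ∑ j ∈ Finset.Ico (k+1) T, ((j : ℝ) ^ 2)⁻¹ with hQ'
    have hexpo : c ^ 2 / 8 + (c ^ 2 * (k:ℝ) ^ 2 * Q' / 8 + c * k * m / T)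
        = c ^ 2 * (k : ℝ) ^ 2 * (((k : ℝ) ^ 2)⁻¹ + Q') / 8 + c * k * m / T := by
      field_simp
      ring
    have hexp : ((k : ℝ) + 1) * Real.exp (c ^ 2 / 8) * ((T.choose (k+1) : ℝ) *
          Real.exp (c ^ 2 * (k:ℝ) ^ 2 * Q' / 8 + c * k * m / T))
        = (((k:ℝ) + 1) * (T.choose (k+1) : ℝ)) *
          Real.exp (c ^ 2 * (k : ℝ) ^ 2 * (∑ j ∈ Finset.Ico k T, ((j : ℝ) ^ 2)⁻¹) / 8
            + c * k * m / T) := by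
      rw [hsplit, ← hexpo,
        Real.exp_add (c ^ 2 / 8) (c ^ 2 * (k:ℝ) ^ 2 * Q' / 8 + c * (k:ℝ) * m / (T:ℝ))]
      ring
    rw [hexp] at hchain
    have hnat : ((k:ℝ) + 1) * (T.choose (k+1) : ℝ) = ((T - k : ℕ) : ℝ) * (T.choose k : ℝ) := by
      have := Nat.choose_succ_right_eq T k
      have hcast : ((T.choose (k+1) * (k+1) : ℕ) : ℝ) = ((T.choose k * (T - k) : ℕ) : ℝ) := by
        exact_mod_cast congrArg Nat.cast this
      push_cast at hcast
      linarith
    rw [hnat, mul_assoc] at hchain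
    exact le_of_mul_le_mul_left hchain hTk0

lemma Qbound (K : ℕ) (hK : 1 ≤ K) :
    ∀ N : ℕ, 1 ≤ N → ∑ j ∈ Finset.Ico K (N + K), ((j : ℝ) ^ 2)⁻¹
      ≤ (N : ℝ) * ((K : ℝ) + 1) / ((K : ℝ) ^ 2 * ((N : ℝ) + K)) := by
  have hy : (0:ℝ) < (K:ℝ) := by exact_mod_cast hK
  intro N hN
  induction N, hN using Nat.le_induction with
  | base =>
    have hico : Finset.Ico K (1 + K) = {K} := by
      rw [add_comm]
      exact Nat.Ico_succ_singleton K
    rw [hico, Finset.sum_singleton]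
    apply le_of_eq
    rw [Nat.cast_one]
    field_simp
    ring
  | succ n hn ih =>
    have hx : (0:ℝ) < (n:ℝ) := by exact_mod_cast hn
    have hsplit : (n + 1 + K) = (n + K) + 1 := by omega
    rw [hsplit, Finset.sum_Ico_succ_top (by omega : K ≤ n + K)]
    have hcast : ((n + K : ℕ) : ℝ) = (n : ℝ) + K := by push_cast; ring
    rw [hcast]
    have hstep : (n : ℝ) * ((K : ℝ) + 1) / ((K : ℝ) ^ 2 * ((n : ℝ) + K))
        + (((n:ℝ) + K) ^ 2)⁻¹
        ≤ ((n:ℝ) + 1) * ((K : ℝ) + 1) / ((K : ℝ) ^ 2 * (((n:ℝ) + 1) + K)) := by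
      have d1 : (0:ℝ) < (K:ℝ) ^ 2 * ((n:ℝ) + K) := by positivity
      have d2 : (0:ℝ) < ((n:ℝ) + K) ^ 2 := by positivity
      have d3 : (0:ℝ) < (K:ℝ) ^ 2 * (((n:ℝ) + 1) + K) := by positivity
      rw [← one_div, div_add_div _ _ d1.ne' d2.ne', div_le_div_iff₀ (by positivity) d3]
      nlinarith [mul_pos (mul_pos hx (mul_pos hy (mul_pos hy hy)))
        (by positivity : (0:ℝ) < (n:ℝ) + K)]
    have hpush : ((n + 1 : ℕ) : ℝ) = (n : ℝ) + 1 := by push_cast; ring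
    rw [hpush]
    linarith

theorem stmt_2 (N K : ℕ) (hN : 0 < N) (hK : 0 < K)
    (Y : Fin (N + K) → ℝ) (hY : ∀ j, Y j = 0 ∨ Y j = 1)
    (ν : ℝ) (hν0 : 0 < ν) (hν1 : ν < 1) :
    (((Finset.powersetCard K (Finset.univ : Finset (Fin (N + K)))).filter
          (fun S => (∑ j ∈ Finset.univ \ S, Y j) ≥
            ((N : ℝ) / K) * (∑ j ∈ S, Y j) + (N : ℝ) * ν)).card : ℝ) /
        ((Finset.powersetCard K (Finset.univ : Finset (Fin (N + K)))).card : ℝ) ≤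
      Real.exp (-(2 * ν ^ 2 * N * K ^ 2) / (((N : ℝ) + K) * ((K : ℝ) + 1))) := by
  classical
  have hKR : (0:ℝ) < (K:ℝ) := by exact_mod_cast hK
  have hNR : (0:ℝ) < (N:ℝ) := by exact_mod_cast hN
  have hTR : (0:ℝ) < ((N + K : ℕ) : ℝ) := by positivity
  have hTR' : (0:ℝ) < (N:ℝ) + (K:ℝ) := by positivity
  set m : ℝ := ∑ i, Y i with hm
  set h : ℝ := 4 * (K:ℝ) * ν / ((K:ℝ) + 1) with hh
  have hhpos : 0 < h := by positivity
  set θ : ℝ := ((K:ℝ) * m - (K:ℝ) * N * ν) / ((N:ℝ) + K) with hθ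
  set F := (Finset.powersetCard K (Finset.univ : Finset (Fin (N + K)))).filter
      (fun S => (∑ j ∈ Finset.univ \ S, Y j) ≥
        ((N : ℝ) / K) * (∑ j ∈ S, Y j) + (N : ℝ) * ν) with hF
  -- each S in the event has small sum
  have hev : ∀ S ∈ F, ∑ i ∈ S, Y i ≤ θ := by
    intro S hS
    rw [hF, Finset.mem_filter] at hS
    obtain ⟨hS1, hS2⟩ := hS
    rw [Finset.mem_powersetCard] at hS1
    have hsd : ∑ j ∈ Finset.univ \ S, Y j = m - ∑ i ∈ S, Y i := by
      rw [Finset.sum_sdiff_eq_sub (Finset.subset_univ S), hm]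
    rw [hsd] at hS2
    set s : ℝ := ∑ i ∈ S, Y i with hs
    have h1 : (N:ℝ) / K * s = (N:ℝ) * s / K := by ring
    have h2 : (N:ℝ) * s / K ≤ m - s - (N:ℝ) * ν := by
      rw [← h1]; linarith
    have h3 : (N:ℝ) * s ≤ (m - s - (N:ℝ) * ν) * K := (div_le_iff₀ hKR).1 h2
    rw [hθ, le_div_iff₀ hTR']
    nlinarith
  -- Chernoff per term
  have key1 : ((F.card : ℝ)) ≤ Real.exp (h * θ) *
      ∑ S ∈ Finset.powersetCard K (Finset.univ : Finset (Fin (N + K))),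
        Real.exp (-h * ∑ i ∈ S, Y i) := by
    have step1 : ((F.card : ℝ)) = ∑ S ∈ F, (1:ℝ) := by
      rw [Finset.sum_const, nsmul_eq_mul, mul_one]
    rw [step1]
    have step2 : ∑ S ∈ F, (1:ℝ) ≤ ∑ S ∈ F, Real.exp (h * θ) * Real.exp (-h * ∑ i ∈ S, Y i) := by
      apply Finset.sum_le_sum
      intro S hS
      rw [← Real.exp_add]
      have : (0:ℝ) ≤ h * θ + -h * ∑ i ∈ S, Y i := by
        have := hev S hS
        nlinarith
      calc (1:ℝ) = Real.exp 0 := Real.exp_zero.symm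
        _ ≤ _ := Real.exp_le_exp.2 this
    refine le_trans step2 ?_
    rw [← Finset.mul_sum]
    apply mul_le_mul_of_nonneg_left _ (Real.exp_pos _).le
    apply Finset.sum_le_sum_of_subset_of_nonneg (Finset.filter_subset _ _)
    intro S _ _
    exact (Real.exp_pos _).le
  -- MGF bound
  have hmgf := mgf_rec Y hY N K (by omega) (by omega) (-h)
  set Q : ℝ := ∑ j ∈ Finset.Ico K (N + K), ((j : ℝ) ^ 2)⁻¹ with hQ
  have hQb : Q ≤ (N : ℝ) * ((K : ℝ) + 1) / ((K : ℝ) ^ 2 * ((N : ℝ) + K)) :=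
    Qbound K (by omega) N (by omega)
  -- denominator
  have hcard : (((Finset.powersetCard K (Finset.univ : Finset (Fin (N + K)))).card : ℕ) : ℝ)
      = ((N + K).choose K : ℝ) := by
    rw [Finset.card_powersetCard, Finset.card_univ, Fintype.card_fin]
  have hchoose : (0:ℝ) < ((N + K).choose K : ℝ) := by
    exact_mod_cast Nat.choose_pos (by omega : K ≤ N + K)
  -- combine
  rw [hcard, div_le_iff₀ hchoose]
  calc ((F.card : ℝ))
      ≤ Real.exp (h * θ) *
        ∑ S ∈ Finset.powersetCard K (Finset.univ : Finset (Fin (N + K))),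
          Real.exp (-h * ∑ i ∈ S, Y i) := key1
    _ ≤ Real.exp (h * θ) * (((N + K).choose K : ℝ) *
        Real.exp ((-h) ^ 2 * (K : ℝ) ^ 2 * Q / 8 + (-h) * K * m / ((N + K : ℕ) : ℝ))) := by
        apply mul_le_mul_of_nonneg_left hmgf (Real.exp_pos _).le
    _ = ((N + K).choose K : ℝ) *
        Real.exp (h * θ + (h ^ 2 * (K : ℝ) ^ 2 * Q / 8 - h * K * m / ((N:ℝ) + K))) := by
        rw [mul_left_comm, ← Real.exp_add]
        congr 2
        push_cast
        ring
    _ ≤ ((N + K).choose K : ℝ) *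
        Real.exp (-(2 * ν ^ 2 * N * K ^ 2) / (((N : ℝ) + K) * ((K : ℝ) + 1))) := by
        apply mul_le_mul_of_nonneg_left _ hchoose.le
        apply Real.exp_le_exp.2
        have hQterm : h ^ 2 * (K : ℝ) ^ 2 * Q / 8
            ≤ h ^ 2 * (K : ℝ) ^ 2 * ((N : ℝ) * ((K : ℝ) + 1) / ((K : ℝ) ^ 2 * ((N : ℝ) + K))) / 8 := by
          gcongr
        have heq : h * θ + (h ^ 2 * (K : ℝ) ^ 2 *
              ((N : ℝ) * ((K : ℝ) + 1) / ((K : ℝ) ^ 2 * ((N : ℝ) + K))) / 8 - h * K * m / ((N:ℝ) + K))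
            = -(2 * ν ^ 2 * N * K ^ 2) / (((N : ℝ) + K) * ((K : ℝ) + 1)) := by
          rw [hθ, hh]
          field_simp
          ring
        linarith [hQterm]
    _ = Real.exp (-(2 * ν ^ 2 * N * K ^ 2) / (((N : ℝ) + K) * ((K : ℝ) + 1))) *
        ((N + K).choose K : ℝ) := by ring
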